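/- Substituting s = a² and a'(r) = √(w(a²)) reduces the rotationally symmetric shrinking soliton system to the single second-order ODE 4s²ww'' − [2sw' + s − 2(n−2)] s w' + 2(n−2)(1−w)w = 0 for w = w(s). -/

import Mathlib

/-- Substituting `s = a²` and `a'(r) = √(w(a²))` reduces the rotationally
symmetric shrinking soliton system to the single second-order ODE
`4s²ww'' − [2sw' + s − 2(n−2)] s w' + 2(n−2)(1−w)w = 0` for `w = w(s)`.

Encoding: starting from the system `1 + 2(n−1)w' = 8sw f'' + 4w f' + 4sw' f'` and
`4sw f' = s − 2[(n−2) − sw' − (n−2)w]` (with `'` denoting `d/ds`), eliminating `f`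
yields the stated ODE for `w`. -/
theorem stmt12 (n : ℕ) (hn : 2 ≤ n) (S : ℝ) (hS : 0 ≤ S) (w f : ℝ → ℝ)
    (hw : ∀ s ∈ Set.Ioi S, 0 < w s)
    (hdw : ∀ s ∈ Set.Ioi S, DifferentiableAt ℝ w s ∧ DifferentiableAt ℝ (deriv w) s)
    (hdf : ∀ s ∈ Set.Ioi S, DifferentiableAt ℝ f s ∧ DifferentiableAt ℝ (deriv f) s)
    (h1 : ∀ s ∈ Set.Ioi S,
      1 + 2 * ((n : ℝ) - 1) * deriv w s
        = 8 * s * w s * deriv (deriv f) s + 4 * w s * deriv f s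
          + 4 * s * deriv w s * deriv f s)
    (h2 : ∀ s ∈ Set.Ioi S,
      4 * s * w s * deriv f s
        = s - 2 * (((n : ℝ) - 2) - s * deriv w s - ((n : ℝ) - 2) * w s)) :
    ∀ s ∈ Set.Ioi S,
      4 * s ^ 2 * w s * deriv (deriv w) s
        - (2 * s * deriv w s + s - 2 * ((n : ℝ) - 2)) * s * deriv w s
        + 2 * ((n : ℝ) - 2) * (1 - w s) * w s = 0 := by
  intro s hs
  have hws : HasDerivAt w (deriv w s) s := (hdw s hs).1.hasDerivAt
  have hw's : HasDerivAt (deriv w) (deriv (deriv w) s) s := (hdw s hs).2.hasDerivAt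
  have hfs : HasDerivAt (deriv f) (deriv (deriv f) s) s := (hdf s hs).2.hasDerivAt
  have hL : HasDerivAt (fun t => 4 * t * w t * deriv f t)
      ((4 * w s + 4 * s * deriv w s) * deriv f s + 4 * s * w s * deriv (deriv f) s) s := by
    have h := (((hasDerivAt_id s).const_mul (4:ℝ)).mul hws).mul hfs
    rw [mul_one] at h
    exact h
  have hR : HasDerivAt (fun t => t - 2 * (((n : ℝ) - 2) - t * deriv w t - ((n : ℝ) - 2) * w t))
      (1 - 2 * (0 - (1 * deriv w s + s * deriv (deriv w) s) - ((n : ℝ) - 2) * deriv w s)) s := by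
    have h := (hasDerivAt_id s).sub
      ((((hasDerivAt_const s (((n:ℝ) - 2))).sub ((hasDerivAt_id s).mul hw's)).sub
        (hws.const_mul ((n:ℝ) - 2))).const_mul 2)
    exact h
  have hev : (fun t => 4 * t * w t * deriv f t)
      =ᶠ[nhds s] (fun t => t - 2 * (((n : ℝ) - 2) - t * deriv w t - ((n : ℝ) - 2) * w t)) := by
    filter_upwards [isOpen_Ioi.mem_nhds hs] with t ht using h2 t ht
  have h3 : (4 * w s + 4 * s * deriv w s) * deriv f s + 4 * s * w s * deriv (deriv f) s
      = 1 - 2 * (0 - (1 * deriv w s + s * deriv (deriv w) s) - ((n : ℝ) - 2) * deriv w s) := by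
    rw [← hL.deriv, ← hR.deriv]
    exact hev.deriv_eq
  have h1s := h1 s hs
  have h2s := h2 s hs
  linear_combination (-(s * w s)) * h1s - (2 * s * w s) * h3 + (w s + s * deriv w s) * h2s
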